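/- With χ(x) = x^{1/2 + δ·cos(ln(x+1))} for fixed α > 0 and δ ∈ (0, 1/2), the Karamata-type asymptotic holds: ∫_x^∞ e^{−α y − χ(y)} dy ~ α^{−1} e^{−α x − χ(x)} as x → ∞, i.e., α e^{α x + χ(x)} ∫_x^∞ e^{−α y − χ(y)} dy → 1. -/

import Mathlib

open MeasureTheory Filter Set

noncomputable section

/-- `χ(x) = x^{1/2 + δ·cos(ln(x+1))}` (real power). -/
def chiFn (δ : ℝ) (x : ℝ) : ℝ := x ^ ((1:ℝ)/2 + δ * Real.cos (Real.log (x + 1)))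

/-- The normalizing constant `a = (∫₀^∞ e^{-χ(y)} dy)⁻¹`. -/
def clineA (δ : ℝ) : ℝ := (∫ y in Set.Ioi (0:ℝ), Real.exp (-chiFn δ y))⁻¹

/-- The Cline-type density `f(x) = a e^{-χ(x)}` for `x ≥ 0`, `0` for `x < 0`. -/
def clineF (δ : ℝ) (x : ℝ) : ℝ :=
  if x < 0 then 0 else clineA δ * Real.exp (-chiFn δ x)

/-- The long-tailed density class `𝓛₀`. -/
def LongTailedDensity (f : ℝ → ℝ) : Prop :=
  (∀ᶠ x in atTop, 0 < f x) ∧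
  ∀ t : ℝ, Tendsto (fun x => f (x + t) / f x) atTop (nhds 1)

namespace ClineAux

def ee (δ x : ℝ) : ℝ := 1/2 + δ * Real.cos (Real.log (x + 1))

lemma chi_eq_exp {δ x : ℝ} (hx : 0 < x) : chiFn δ x = Real.exp (Real.log x * ee δ x) := by
  rw [chiFn, Real.rpow_def_of_pos hx]; rfl

def dd (δ x : ℝ) : ℝ :=
  Real.exp (Real.log x * ee δ x) *
    (x⁻¹ * ee δ x + Real.log x * (-Real.sin (Real.log (x + 1)) * (x + 1)⁻¹ * δ))

lemma hasDerivAt_chi {δ x : ℝ} (hx : 0 < x) : HasDerivAt (chiFn δ) (dd δ x) x := by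
  have hx1 : (0:ℝ) < x + 1 := by linarith
  have h1 : HasDerivAt (fun y : ℝ => Real.log (y + 1)) ((x+1)⁻¹) x := by
    simpa using ((hasDerivAt_id' x).add_const 1).log hx1.ne'
  have h2 : HasDerivAt (fun y : ℝ => ee δ y)
      (δ * (-Real.sin (Real.log (x + 1)) * (x + 1)⁻¹)) x := by
    have := ((Real.hasDerivAt_cos (Real.log (x+1))).comp x h1).const_mul δ
    simpa [ee] using this.const_add (1/2 : ℝ)
  have h3 : HasDerivAt (fun y : ℝ => Real.log y * ee δ y)
      (x⁻¹ * ee δ x + Real.log x * (δ * (-Real.sin (Real.log (x + 1)) * (x + 1)⁻¹))) x :=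
    (Real.hasDerivAt_log hx.ne').mul h2
  have h4 := h3.exp
  have h5 : chiFn δ =ᶠ[nhds x] fun y => Real.exp (Real.log y * ee δ y) :=
    Filter.eventuallyEq_of_mem (Ioi_mem_nhds hx) (fun y hy => chi_eq_exp hy)
  refine (HasDerivAt.congr_of_eventuallyEq ?_ h5)
  refine h4.congr_deriv ?_
  unfold dd
  ring

lemma dd_bound {δ x : ℝ} (hδ0 : 0 < δ) (hδ : δ < 1/2) (hx : 1 ≤ x) :
    |dd δ x| ≤ x ^ (δ - 1/2) * (1 + Real.log x) := by
  have hx0 : (0:ℝ) < x := lt_of_lt_of_le one_pos hx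
  have hlog : 0 ≤ Real.log x := Real.log_nonneg hx
  have hee : |ee δ x| ≤ 1 := by
    have h1 : |δ * Real.cos (Real.log (x+1))| ≤ δ := by
      rw [abs_mul, abs_of_pos hδ0]
      nlinarith [Real.abs_cos_le_one (Real.log (x+1)), hδ0.le]
    have := abs_add_le (1/2 : ℝ) (δ * Real.cos (Real.log (x+1)))
    unfold ee
    calc |1/2 + δ * Real.cos (Real.log (x+1))| ≤ |(1:ℝ)/2| + |δ * Real.cos (Real.log (x+1))| :=
          abs_add_le _ _
      _ ≤ 1/2 + δ := by rw [abs_of_pos]; linarith; norm_num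
      _ ≤ 1 := by linarith
  have hexp : Real.exp (Real.log x * ee δ x) ≤ x ^ ((1:ℝ)/2 + δ) := by
    rw [Real.rpow_def_of_pos hx0]
    apply Real.exp_le_exp.mpr
    have : ee δ x ≤ 1/2 + δ := by
      unfold ee
      nlinarith [Real.cos_le_one (Real.log (x+1)), hδ0.le]
    nlinarith
  have hsecond : |x⁻¹ * ee δ x + Real.log x * (-Real.sin (Real.log (x + 1)) * (x + 1)⁻¹ * δ)|
      ≤ (1 + Real.log x) * x⁻¹ := by
    have h1 : |x⁻¹ * ee δ x| ≤ x⁻¹ := by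
      rw [abs_mul, abs_of_pos (inv_pos.mpr hx0)]
      nlinarith [inv_pos.mpr hx0]
    have hsin := Real.abs_sin_le_one (Real.log (x+1))
    have hx1 : (0:ℝ) < x + 1 := by linarith
    have h2 : |Real.log x * (-Real.sin (Real.log (x + 1)) * (x + 1)⁻¹ * δ)| ≤ Real.log x * x⁻¹ := by
      rw [abs_mul, abs_of_nonneg hlog]
      have : |(-Real.sin (Real.log (x + 1)) * (x + 1)⁻¹ * δ)| ≤ x⁻¹ := by
        rw [abs_mul, abs_mul, abs_neg, abs_of_pos (inv_pos.mpr hx1), abs_of_pos hδ0]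
        have hi : (x+1)⁻¹ ≤ x⁻¹ := by
          apply inv_anti₀ hx0; linarith
        have : |Real.sin (Real.log (x+1))| * (x+1)⁻¹ * δ ≤ 1 * (x+1)⁻¹ * 1 := by
          apply mul_le_mul
          apply mul_le_mul hsin le_rfl (inv_pos.mpr hx1).le one_pos.le
          · linarith
          · exact hδ0.le
          · positivity
        calc |Real.sin (Real.log (x+1))| * (x+1)⁻¹ * δ ≤ 1 * (x+1)⁻¹ * 1 := this
          _ = (x+1)⁻¹ := by ring
          _ ≤ x⁻¹ := hi
      nlinarith [this, hlog, abs_nonneg (-Real.sin (Real.log (x + 1)) * (x + 1)⁻¹ * δ)]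
    calc |x⁻¹ * ee δ x + Real.log x * (-Real.sin (Real.log (x + 1)) * (x + 1)⁻¹ * δ)|
        ≤ |x⁻¹ * ee δ x| + |Real.log x * (-Real.sin (Real.log (x + 1)) * (x + 1)⁻¹ * δ)| :=
          abs_add_le _ _
      _ ≤ x⁻¹ + Real.log x * x⁻¹ := add_le_add h1 h2
      _ = (1 + Real.log x) * x⁻¹ := by ring
  have key : |dd δ x| ≤ x ^ ((1:ℝ)/2 + δ) * ((1 + Real.log x) * x⁻¹) := by
    unfold dd
    rw [abs_mul, Real.abs_exp]
    apply mul_le_mul hexp hsecond (abs_nonneg _)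
    positivity
  have hrw : x ^ ((1:ℝ)/2 + δ) * ((1 + Real.log x) * x⁻¹) = x ^ (δ - 1/2) * (1 + Real.log x) := by
    have : x ^ (δ - 1/2) = x ^ ((1:ℝ)/2 + δ) * x⁻¹ := by
      rw [← Real.rpow_neg_one x, ← Real.rpow_add hx0]
      norm_num
      ring_nf
    rw [this]; ring
  rw [← hrw]; exact key

lemma tendsto_bound {δ : ℝ} (hδ0 : 0 < δ) (hδ : δ < 1/2) :
    Tendsto (fun x : ℝ => x ^ (δ - 1/2) * (1 + Real.log x)) atTop (nhds 0) := by
  have hε : (0:ℝ) < 1/2 - δ := by linarith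
  have h1 : Tendsto (fun x : ℝ => x ^ (δ - 1/2)) atTop (nhds 0) := by
    have := tendsto_rpow_neg_atTop hε
    simpa [neg_sub] using this
  have h2 : Tendsto (fun x : ℝ => x ^ (δ - 1/2) * Real.log x) atTop (nhds 0) := by
    have hlo := (isLittleO_log_rpow_atTop hε).tendsto_div_nhds_zero
    apply hlo.congr'
    filter_upwards [eventually_gt_atTop (0:ℝ)] with x hx
    rw [div_eq_mul_inv, ← Real.rpow_neg hx.le, neg_sub, mul_comm]
  have := h1.add h2
  rw [add_zero] at this
  apply this.congr
  intro x; ring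

lemma tendsto_dd {δ : ℝ} (hδ0 : 0 < δ) (hδ : δ < 1/2) :
    Tendsto (dd δ) atTop (nhds 0) := by
  apply squeeze_zero_norm' _ (tendsto_bound hδ0 hδ)
  filter_upwards [eventually_ge_atTop (1:ℝ)] with x hx
  simpa using dd_bound hδ0 hδ hx

lemma lip {δ : ℝ} (hδ0 : 0 < δ) (hδ : δ < 1/2) {ε : ℝ} (hε : 0 < ε) :
    ∃ X : ℝ, 1 ≤ X ∧ ∀ x y, X ≤ x → x ≤ y → |chiFn δ y - chiFn δ x| ≤ ε * (y - x) := by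
  have h := (NormedAddCommGroup.tendsto_nhds_zero.mp (tendsto_dd hδ0 hδ)) ε hε
  rw [eventually_atTop] at h
  obtain ⟨X₀, hX₀⟩ := h
  refine ⟨max X₀ 1, le_max_right _ _, fun x y hx hxy => ?_⟩
  have hX1 : (1:ℝ) ≤ max X₀ 1 := le_max_right _ _
  have hder : ∀ z ∈ Ici (max X₀ 1), HasDerivWithinAt (chiFn δ) (dd δ z) (Ici (max X₀ 1)) z :=
    fun z hz => (hasDerivAt_chi (lt_of_lt_of_le one_pos (hX1.trans hz))).hasDerivWithinAt
  have hbd : ∀ z ∈ Ici (max X₀ 1), ‖dd δ z‖ ≤ ε := fun z hz =>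
    ((hX₀ z ((le_max_left _ _).trans hz)).le)
  have := (convex_Ici (max X₀ 1)).norm_image_sub_le_of_norm_hasDerivWithin_le hder hbd
    (mem_Ici.mpr hx) (mem_Ici.mpr (hx.trans hxy))
  simpa [Real.norm_eq_abs, abs_of_nonneg (sub_nonneg.mpr hxy)] using this

lemma tendsto_chi_shift {δ : ℝ} (hδ0 : 0 < δ) (hδ : δ < 1/2) {t : ℝ} (ht : 0 ≤ t) :
    Tendsto (fun x => chiFn δ (t + x) - chiFn δ x) atTop (nhds 0) := by
  rw [NormedAddCommGroup.tendsto_nhds_zero]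
  intro ε hε
  have hε' : 0 < ε / (2 * (t + 1)) := by positivity
  obtain ⟨X, hX1, hlip⟩ := lip hδ0 hδ hε'
  filter_upwards [eventually_ge_atTop X] with x hx
  have h := hlip x (t + x) hx (by linarith)
  rw [add_sub_cancel_right] at h
  rw [Real.norm_eq_abs]
  calc |chiFn δ (t + x) - chiFn δ x| ≤ ε / (2 * (t + 1)) * t := h
    _ < ε := by
        rw [div_mul_eq_mul_div, div_lt_iff₀ (by positivity)]
        nlinarith

lemma shift_Ioi (f : ℝ → ℝ) (x : ℝ) : ∫ y in Ioi x, f y = ∫ t in Ioi 0, f (t + x) := by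
  rw [← integral_indicator measurableSet_Ioi, ← integral_indicator measurableSet_Ioi,
    ← integral_add_right_eq_self (fun y => (Ioi x).indicator f y) x]
  congr 1
  ext t
  simp [indicator_apply, mem_Ioi]

lemma chi_continuousAt {δ z : ℝ} (hz : 0 < z) : ContinuousAt (chiFn δ) z := by
  apply ContinuousAt.rpow continuousAt_id _ (Or.inl hz.ne')
  exact continuousAt_const.add (continuousAt_const.mul
    (Real.continuous_cos.continuousAt.comp
      ((Real.continuousAt_log (by linarith)).comp
        ((continuous_id.add continuous_const).continuousAt))))

end ClineAux

open ClineAux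

theorem cline_karamata_asymptotic (α δ : ℝ) (hα : 0 < α) (hδ0 : 0 < δ)
    (hδ : δ < 1/2) :
    Tendsto (fun x : ℝ =>
        α * Real.exp (α * x + chiFn δ x) *
          ∫ y in Set.Ioi x, Real.exp (-(α * y) - chiFn δ y)) atTop (nhds 1) := by
  set F : ℝ → ℝ → ℝ := fun x t => Real.exp (-(α * t) - (chiFn δ (t + x) - chiFn δ x)) with hF
  obtain ⟨X, hX1, hlip⟩ := lip hδ0 hδ (half_pos hα)
  -- the key dominated convergence
  have hlim_int : (∫ t in Ioi (0:ℝ), Real.exp (-(α * t))) = α⁻¹ := by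
    have h := integral_comp_mul_left_Ioi (fun y => Real.exp (-y)) 0 hα
    simp only [mul_zero, integral_exp_neg_Ioi, neg_zero, Real.exp_zero, smul_eq_mul,
      mul_one] at h
    exact h
  have key : Tendsto (fun x => ∫ t in Ioi (0:ℝ), F x t) atTop (nhds α⁻¹) := by
    rw [← hlim_int]
    apply tendsto_integral_filter_of_dominated_convergence
      (fun t => Real.exp (-(α/2) * t))
    · filter_upwards [eventually_ge_atTop (1:ℝ)] with x hx
      apply ContinuousOn.aestronglyMeasurable _ measurableSet_Ioi
      intro t ht
      have ht0 : 0 < t := ht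
      apply ContinuousAt.continuousWithinAt
      apply Real.continuous_exp.continuousAt.comp
      apply ContinuousAt.sub
      · exact ((continuous_const.mul continuous_id).neg).continuousAt
      · apply ContinuousAt.sub _ continuousAt_const
        exact (chi_continuousAt (by linarith)).comp
          ((continuous_id.add continuous_const).continuousAt)
    · filter_upwards [eventually_ge_atTop X] with x hx
      refine (ae_restrict_iff' measurableSet_Ioi).mpr (ae_of_all _ fun t ht => ?_)
      have ht0 : 0 < t := ht
      have hl := hlip x (t + x) hx (by linarith)
      rw [add_sub_cancel_right] at hl
      have habs := abs_le.mp hl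
      rw [Real.norm_eq_abs, Real.abs_exp]
      apply Real.exp_le_exp.mpr
      nlinarith [habs.1, habs.2]
    · exact exp_neg_integrableOn_Ioi 0 (half_pos hα)
    · refine (ae_restrict_iff' measurableSet_Ioi).mpr (ae_of_all _ fun t ht => ?_)
      have ht0 : 0 < t := ht
      have hd := tendsto_chi_shift hδ0 hδ ht0.le
      have h2 : Tendsto (fun x => -(α * t) - (chiFn δ (t + x) - chiFn δ x)) atTop
          (nhds (-(α * t))) := by
        simpa using tendsto_const_nhds.sub hd
      exact (Real.continuous_exp.tendsto _).comp h2
  have key2 : Tendsto (fun x => α * ∫ t in Ioi (0:ℝ), F x t) atTop (nhds 1) := by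
    have := key.const_mul α
    rwa [mul_inv_cancel₀ hα.ne'] at this
  apply key2.congr
  intro x
  rw [shift_Ioi (fun y => Real.exp (-(α * y) - chiFn δ y)) x]
  have heq : (∫ t in Ioi (0:ℝ), F x t) =
      Real.exp (α * x + chiFn δ x) *
        ∫ t in Ioi (0:ℝ), Real.exp (-(α * (t + x)) - chiFn δ (t + x)) := by
    rw [← integral_const_mul]
    refine integral_congr_ae (Eventually.of_forall fun t => ?_)
    show F x t = _
    rw [hF]
    simp only
    rw [← Real.exp_add]
    congr 1
    ring
  rw [heq]
  ring
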